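/- Let M be a maximum-cardinality matching of a finite simple graph F = (V, E), let U be a set of vertices of F not covered by M, and for each v ∈ U let e_v be an edge of F incident to v. Then the graph (V, M ∪ {e_v : v ∈ U}) is a disjoint union of stars. -/
import Mathlib


open SimpleGraph

noncomputable section

/-- The degree of a vertex `v` in a simple graph `G` (as a set cardinality). -/
def gdeg {V : Type*} (G : SimpleGraph V) (v : V) : ℕ := {u | G.Adj v u}.ncard

/-- A graph is a disjoint union of stars iff every edge has an endpoint of degree one. -/
def IsStarForest {V : Type*} (G : SimpleGraph V) : Prop :=
  ∀ u v : V, G.Adj u v → gdeg G u = 1 ∨ gdeg G v = 1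

/-- A matching of `F`, given as a set of pairwise disjoint edges of `F`. -/
def IsMatchingIn {V : Type*} (F : SimpleGraph V) (M : Set (Sym2 V)) : Prop :=
  M ⊆ F.edgeSet ∧ ∀ e ∈ M, ∀ f ∈ M, e ≠ f → ∀ v : V, v ∈ e → v ∉ f

/-- A vertex is covered by a set of edges if it is an endpoint of one of them. -/
def CoveredBy {V : Type*} (M : Set (Sym2 V)) (v : V) : Prop := ∃ e ∈ M, v ∈ e

/-- if `M` is a maximum-cardinality matching of `F`, `U` is a set of vertices
not covered by `M`, and each `v ∈ U` is given an incident edge `e v` of `F`, then the graph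
with edge set `M ∪ {e v : v ∈ U}` is a disjoint union of stars. -/
theorem stmt_2 {V : Type*} [Fintype V] (F : SimpleGraph V) (M : Set (Sym2 V))
    (hM : IsMatchingIn F M)
    (hmax : ∀ M' : Set (Sym2 V), IsMatchingIn F M' → M'.ncard ≤ M.ncard)
    (U : Set V) (hU : ∀ v ∈ U, ¬ CoveredBy M v)
    (e : V → Sym2 V) (he : ∀ v ∈ U, e v ∈ F.edgeSet ∧ v ∈ e v) :
    IsStarForest (SimpleGraph.fromEdgeSet (M ∪ e '' U)) := by
  classical
  have hMfin : M.Finite := Set.toFinite M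
  -- no edge of F has both endpoints uncovered
  have key1 : ∀ a b : V, F.Adj a b → ¬ CoveredBy M a → ¬ CoveredBy M b → False := by
    intro a b hab hca hcb
    have hnotmem : s(a,b) ∉ M := fun h => hca ⟨_, h, by simp⟩
    have hM' : IsMatchingIn F (insert s(a,b) M) := by
      constructor
      · intro f hf
        rcases hf with rfl | hf
        · exact hab
        · exact hM.1 hf
      · intro f hf g hg hfg x hxf hxg
        rcases hf with rfl | hf <;> rcases hg with rfl | hg
        · exact hfg rfl
        · rcases Sym2.mem_iff.1 hxf with rfl | rfl
          · exact hca ⟨g, hg, hxg⟩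
          · exact hcb ⟨g, hg, hxg⟩
        · rcases Sym2.mem_iff.1 hxg with rfl | rfl
          · exact hca ⟨f, hf, hxf⟩
          · exact hcb ⟨f, hf, hxf⟩
        · exact hM.2 f hf g hg hfg x hxf hxg
    have h := hmax _ hM'
    rw [Set.ncard_insert_of_notMem hnotmem hMfin] at h
    omega
  -- the other endpoint of `e v` is covered by `M`
  have key2 : ∀ v ∈ U, ∀ x, x ∈ e v → x ≠ v → CoveredBy M x := by
    intro v hv x hx hxv
    by_contra hcx
    have hev : e v = s(v, x) := (Sym2.mem_and_mem_iff (Ne.symm hxv)).1 ⟨(he v hv).2, hx⟩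
    have hadj : F.Adj v x := by
      have h1 := (he v hv).1
      rw [hev, SimpleGraph.mem_edgeSet] at h1
      exact h1
    exact key1 v x hadj (hU v hv) hcx
  -- pendant vertices have degree 1
  have hpend : ∀ a b : V, a ∈ U →
      (SimpleGraph.fromEdgeSet (M ∪ e '' U)).Adj a b → gdeg (SimpleGraph.fromEdgeSet (M ∪ e '' U)) a = 1 := by
    intro a b ha hab
    have hea : e a = s(a, b) := by
      rcases (SimpleGraph.fromEdgeSet_adj _).1 hab with ⟨hm, hne⟩
      rcases hm with hm | ⟨z, hz, hez⟩
      · exact absurd ⟨_, hm, Sym2.mem_mk_left a b⟩ (hU a ha)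
      · have hzm := (he z hz).2
        rw [hez] at hzm
        rcases Sym2.mem_iff.1 hzm with rfl | rfl
        · exact hez
        · exact absurd (key2 z hz a (by rw [hez]; simp) hne) (hU a ha)
    have hset : {x | (SimpleGraph.fromEdgeSet (M ∪ e '' U)).Adj a x} = {b} := by
      ext x
      simp only [Set.mem_setOf_eq, Set.mem_singleton_iff]
      constructor
      · intro hx
        rcases (SimpleGraph.fromEdgeSet_adj _).1 hx with ⟨hm, hne⟩
        rcases hm with hm | ⟨z, hz, hez⟩
        · exact absurd ⟨_, hm, Sym2.mem_mk_left a x⟩ (hU a ha)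
        · have hzm := (he z hz).2
          rw [hez] at hzm
          rcases Sym2.mem_iff.1 hzm with rfl | rfl
          · have h := hea.symm.trans hez
            rcases Sym2.eq_iff.1 h with ⟨_, h2⟩ | ⟨h1, h2⟩
            · exact h2.symm
            · exact absurd h1 hne
          · exact absurd (key2 z hz a (by rw [hez]; simp) hne) (hU a ha)
      · rintro rfl; exact hab
    unfold gdeg
    rw [hset, Set.ncard_singleton]
  -- if `s(a,b) ∈ M` and `a` has a neighbor `x ≠ b`, then `x ∈ U` with `e x = s(a,x)`
  have hside : ∀ a b x : V, s(a,b) ∈ M →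
      (SimpleGraph.fromEdgeSet (M ∪ e '' U)).Adj a x → x ≠ b → x ∈ U ∧ e x = s(a, x) := by
    intro a b x habM hax hxb
    rcases (SimpleGraph.fromEdgeSet_adj _).1 hax with ⟨hmm, hnax⟩
    rcases hmm with hmm | ⟨z, hz, hez⟩
    · have hne2 : s(a,b) ≠ s(a,x) := by
        intro hEq
        rcases Sym2.eq_iff.1 hEq with ⟨_, h2⟩ | ⟨h1, _⟩
        · exact hxb h2.symm
        · exact hnax h1
      exact absurd (Sym2.mem_mk_left a x) (hM.2 _ habM _ hmm hne2 a (Sym2.mem_mk_left a b))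
    · have hzm := (he z hz).2
      rw [hez] at hzm
      rcases Sym2.mem_iff.1 hzm with rfl | rfl
      · exact absurd ⟨_, habM, Sym2.mem_mk_left z b⟩ (hU z hz)
      · exact ⟨hz, hez⟩
  -- if degree isn't 1, there's a second neighbor
  have hex : ∀ a b : V, (SimpleGraph.fromEdgeSet (M ∪ e '' U)).Adj a b →
      gdeg (SimpleGraph.fromEdgeSet (M ∪ e '' U)) a ≠ 1 →
      ∃ x, (SimpleGraph.fromEdgeSet (M ∪ e '' U)).Adj a x ∧ x ≠ b := by
    intro a b hab hdeg
    by_contra h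
    push_neg at h
    apply hdeg
    have hset : {x | (SimpleGraph.fromEdgeSet (M ∪ e '' U)).Adj a x} = {b} := by
      ext x
      simp only [Set.mem_setOf_eq, Set.mem_singleton_iff]
      exact ⟨fun hx => h x hx, fun hx => hx ▸ hab⟩
    unfold gdeg
    rw [hset, Set.ncard_singleton]
  intro u v huv
  rcases (SimpleGraph.fromEdgeSet_adj _).1 huv with ⟨hmem, hne⟩
  rcases hmem with hm | ⟨w, hw, hew⟩
  · -- s(u,v) ∈ M : augmenting-path argument
    by_contra hcon
    push_neg at hcon
    obtain ⟨h1, h2⟩ := hcon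
    obtain ⟨x, hux, hxv⟩ := hex u v huv h1
    obtain ⟨y, hvy, hyu⟩ := hex v u huv.symm h2
    have hxU := hside u v x hm hux hxv
    have hmv : s(v,u) ∈ M := by rwa [Sym2.eq_swap] at hm
    have hyU := hside v u y hmv hvy hyu
    obtain ⟨hxUU, hexx⟩ := hxU
    obtain ⟨hyUU, heyy⟩ := hyU
    have hxu : x ≠ u := fun h => hux.ne' h
    have hyv : y ≠ v := fun h => hvy.ne' h
    have hxy : x ≠ y := by
      rintro rfl
      have h := hexx.symm.trans heyy
      rcases Sym2.eq_iff.1 h with ⟨h1', _⟩ | ⟨h1', h2'⟩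
      · exact hne h1'
      · exact hxv h2'
    -- build the bigger matching
    set M' : Set (Sym2 V) := insert s(u,x) (insert s(v,y) (M \ {s(u,v)})) with hM'def
    have huxvy : s(u,x) ≠ s(v,y) := by
      intro h
      rcases Sym2.eq_iff.1 h with ⟨h1', _⟩ | ⟨h1', _⟩
      · exact hne h1'
      · exact hyu h1'.symm
    -- vertices of s(u,x) avoid edges of M \ {s(u,v)}
    have huxM : ∀ g ∈ M \ {s(u,v)}, ∀ w, w ∈ s(u,x) → w ∉ g := by
      intro g hg w hw hwg
      rcases Sym2.mem_iff.1 hw with rfl | rfl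
      · exact hM.2 _ hm _ hg.1 (fun h => hg.2 h.symm) w (Sym2.mem_mk_left w v) hwg
      · exact hU w hxUU ⟨g, hg.1, hwg⟩
    have hvyM : ∀ g ∈ M \ {s(u,v)}, ∀ w, w ∈ s(v,y) → w ∉ g := by
      intro g hg w hw hwg
      rcases Sym2.mem_iff.1 hw with rfl | rfl
      · exact hM.2 _ hm _ hg.1 (fun h => hg.2 h.symm) w (Sym2.mem_mk_right u w) hwg
      · exact hU w hyUU ⟨g, hg.1, hwg⟩
    have huxvy_vert : ∀ w, w ∈ s(u,x) → w ∉ s(v,y) := by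
      intro w hw hw'
      rcases Sym2.mem_iff.1 hw with rfl | rfl <;> rcases Sym2.mem_iff.1 hw' with h | h
      · exact hne h
      · exact hyu h.symm
      · exact hxv h
      · exact hxy h
    have hM'match : IsMatchingIn F M' := by
      constructor
      · intro f hf
        rcases hf with rfl | rfl | hf
        · have := (he x hxUU).1; rwa [hexx] at this
        · have := (he y hyUU).1; rwa [heyy] at this
        · exact hM.1 hf.1
      · intro f hf g hg hfg w hwf hwg
        rcases hf with rfl | rfl | hf <;> rcases hg with rfl | rfl | hg
        · exact hfg rfl
        · exact huxvy_vert w hwf hwg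
        · exact huxM g hg w hwf hwg
        · exact huxvy_vert w hwg hwf
        · exact hfg rfl
        · exact hvyM g hg w hwf hwg
        · exact huxM f hf w hwg hwf
        · exact hvyM f hf w hwg hwf
        · exact hM.2 f hf.1 g hg.1 hfg w hwf hwg
    -- cardinality count
    have hdiff : (M \ {s(u,v)}).ncard + 1 = M.ncard :=
      Set.ncard_diff_singleton_add_one hm hMfin
    have hvynot : s(v,y) ∉ M \ {s(u,v)} := fun h => hU y hyUU ⟨_, h.1, Sym2.mem_mk_right v y⟩
    have huxnot : s(u,x) ∉ insert s(v,y) (M \ {s(u,v)}) := by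
      rintro (h | h)
      · exact huxvy h
      · exact hU x hxUU ⟨_, h.1, Sym2.mem_mk_right u x⟩
    have hc1 : (insert s(v,y) (M \ {s(u,v)})).ncard = (M \ {s(u,v)}).ncard + 1 :=
      Set.ncard_insert_of_notMem hvynot (Set.toFinite _)
    have hc2 : M'.ncard = (insert s(v,y) (M \ {s(u,v)})).ncard + 1 :=
      Set.ncard_insert_of_notMem huxnot (Set.toFinite _)
    have := hmax M' hM'match
    omega
  · -- pendant edge
    have hwm := (he w hw).2
    rw [hew] at hwm
    rcases Sym2.mem_iff.1 hwm with rfl | rfl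
    · exact Or.inl (hpend w v hw huv)
    · exact Or.inr (hpend w u hw huv.symm)
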